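/- The asymptotic efficiency AE(x) = (1 - 2α)·t_α(x)/f_X(x) satisfies AE(x) ≤ 1 for all x with f_X(x) > 0 and all α ∈ [0, 1/2), and AE(x) = 1 when α = 0. -/

import Mathlib

open Finset Filter Topology


lemma binom_sum (p q fx : ℝ) (n : ℕ) (hn : 1 ≤ n) :
    ∑ i ∈ Finset.Icc 1 n,
      (n : ℝ) * ((n - 1).choose (i - 1) : ℝ) * p ^ (i - 1) * q ^ (n - i) * fx
    = (n : ℝ) * (p + q) ^ (n - 1) * fx := by
  rw [← Finset.Ico_add_one_right_eq_Icc, Finset.sum_Ico_eq_sum_range]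
  have h1 : n + 1 - 1 = n := by omega
  rw [h1, add_pow]
  have h2 : n - 1 + 1 = n := by omega
  rw [h2, Finset.mul_sum, Finset.sum_mul]
  apply Finset.sum_congr rfl
  intro j hj
  have e1 : 1 + j - 1 = j := by omega
  have e2 : n - (1 + j) = n - 1 - j := by omega
  rw [e1, e2]; ring

lemma floor_ratio (α : ℝ) (hα : 0 ≤ α) :
    Tendsto (fun n : ℕ => (⌊(n : ℝ) * α⌋₊ : ℝ) / n) atTop (𝓝 α) := by
  have hlow : Tendsto (fun n : ℕ => α - 1 / (n : ℝ)) atTop (𝓝 α) := by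
    have := tendsto_one_div_atTop_nhds_zero_nat (𝕜 := ℝ)
    simpa using (tendsto_const_nhds (x := α)).sub this
  apply tendsto_of_tendsto_of_tendsto_of_le_of_le' hlow tendsto_const_nhds
  · filter_upwards [eventually_ge_atTop 1] with n hn
    have hn' : (0:ℝ) < n := by exact_mod_cast hn
    have h := Nat.sub_one_lt_floor ((n : ℝ) * α)
    rw [sub_le_iff_le_add, ← add_div, le_div_iff₀ hn']
    nlinarith [h]
  · filter_upwards [eventually_ge_atTop 1] with n hn
    have hn' : (0:ℝ) < n := by exact_mod_cast hn
    rw [div_le_iff₀ hn']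
    have := Nat.floor_le (by positivity : (0:ℝ) ≤ (n : ℝ) * α)
    linarith

/-- The asymptotic efficiency `AE(x) = (1-2α) t_α(x) / f_X(x)` satisfies `AE(x) ≤ 1`
for all `x` with `f_X(x) > 0` and all `α ∈ [0, 1/2)`, and `AE(x) = 1` when `α = 0`. -/
theorem asymptotic_efficiency_le_one (α : ℝ) (hα : 0 ≤ α ∧ α < 1 / 2)
    (F f : ℝ → ℝ) (x : ℝ) (hF : 0 ≤ F x ∧ F x ≤ 1) (hf : 0 < f x) (t : ℝ)
    (ht : Tendsto (fun n : ℕ =>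
        (1 / ((n : ℝ) - 2 * (⌊(n : ℝ) * α⌋₊ : ℝ))) *
          ∑ i ∈ Finset.Icc (⌊(n : ℝ) * α⌋₊ + 1) (n - ⌊(n : ℝ) * α⌋₊),
            (n : ℝ) * ((n - 1).choose (i - 1) : ℝ) * F x ^ (i - 1) * (1 - F x) ^ (n - i) * f x)
      atTop (𝓝 t)) :
    (1 - 2 * α) * t / f x ≤ 1 ∧ (α = 0 → (1 - 2 * α) * t / f x = 1) := by
  obtain ⟨hα0, hα2⟩ := hα
  obtain ⟨hF0, hF1⟩ := hF
  have hne : (0 : ℝ) < 1 - 2 * α := by linarith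
  -- full-sum identity
  have hfull : ∀ n : ℕ, 1 ≤ n →
      ∑ i ∈ Finset.Icc 1 n,
        (n : ℝ) * ((n - 1).choose (i - 1) : ℝ) * F x ^ (i - 1) * (1 - F x) ^ (n - i) * f x
      = (n : ℝ) * f x := by
    intro n hn
    rw [binom_sum _ _ _ _ hn]
    norm_num
  -- denominator positivity for n ≥ 1
  have hden : ∀ n : ℕ, 1 ≤ n → 0 < (n : ℝ) - 2 * (⌊(n : ℝ) * α⌋₊ : ℝ) := by
    intro n hn
    have hn' : (1 : ℝ) ≤ n := by exact_mod_cast hn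
    have h := Nat.floor_le (by positivity : (0 : ℝ) ≤ (n : ℝ) * α)
    nlinarith
  -- eventual bound on the sequence
  have hbound : ∀ᶠ n : ℕ in atTop,
      (1 / ((n : ℝ) - 2 * (⌊(n : ℝ) * α⌋₊ : ℝ))) *
          ∑ i ∈ Finset.Icc (⌊(n : ℝ) * α⌋₊ + 1) (n - ⌊(n : ℝ) * α⌋₊),
            (n : ℝ) * ((n - 1).choose (i - 1) : ℝ) * F x ^ (i - 1) * (1 - F x) ^ (n - i) * f x
        ≤ ((n : ℝ) / ((n : ℝ) - 2 * (⌊(n : ℝ) * α⌋₊ : ℝ))) * f x := by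
    filter_upwards [eventually_ge_atTop 1] with n hn
    have hd := hden n hn
    have hsub : Finset.Icc (⌊(n : ℝ) * α⌋₊ + 1) (n - ⌊(n : ℝ) * α⌋₊) ⊆ Finset.Icc 1 n :=
      Finset.Icc_subset_Icc (by omega) (by omega)
    have hS : ∑ i ∈ Finset.Icc (⌊(n : ℝ) * α⌋₊ + 1) (n - ⌊(n : ℝ) * α⌋₊),
            (n : ℝ) * ((n - 1).choose (i - 1) : ℝ) * F x ^ (i - 1) * (1 - F x) ^ (n - i) * f x
        ≤ (n : ℝ) * f x := by
      rw [← hfull n hn]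
      apply Finset.sum_le_sum_of_subset_of_nonneg hsub
      intro i _ _
      have h1 : (0 : ℝ) ≤ 1 - F x := by linarith
      exact mul_nonneg (mul_nonneg (mul_nonneg (mul_nonneg (by positivity) (by positivity))
        (pow_nonneg hF0 _)) (pow_nonneg h1 _)) hf.le
    calc (1 / ((n : ℝ) - 2 * (⌊(n : ℝ) * α⌋₊ : ℝ))) * _ ≤
        (1 / ((n : ℝ) - 2 * (⌊(n : ℝ) * α⌋₊ : ℝ))) * ((n : ℝ) * f x) :=
          mul_le_mul_of_nonneg_left hS (by positivity)
      _ = ((n : ℝ) / ((n : ℝ) - 2 * (⌊(n : ℝ) * α⌋₊ : ℝ))) * f x := by ring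
  -- limit of the coefficient
  have hcoef : Tendsto (fun n : ℕ => ((n : ℝ) / ((n : ℝ) - 2 * (⌊(n : ℝ) * α⌋₊ : ℝ))) * f x)
      atTop (𝓝 ((1 - 2 * α)⁻¹ * f x)) := by
    have h1 : Tendsto (fun n : ℕ => ((n : ℝ) - 2 * (⌊(n : ℝ) * α⌋₊ : ℝ)) / n) atTop
        (𝓝 (1 - 2 * α)) := by
      have h2 : Tendsto (fun n : ℕ => 1 - 2 * ((⌊(n : ℝ) * α⌋₊ : ℝ) / n)) atTop
          (𝓝 (1 - 2 * α)) := by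
        simpa using (tendsto_const_nhds (x := (1 : ℝ))).sub ((floor_ratio α hα0).const_mul 2)
      apply h2.congr'
      filter_upwards [eventually_ge_atTop 1] with n hn
      have hn' : (n : ℝ) ≠ 0 := by
        have : (1 : ℝ) ≤ n := by exact_mod_cast hn
        linarith
      field_simp
    have h3 := h1.inv₀ (ne_of_gt hne)
    have h4 : Tendsto (fun n : ℕ => (n : ℝ) / ((n : ℝ) - 2 * (⌊(n : ℝ) * α⌋₊ : ℝ))) atTop
        (𝓝 ((1 - 2 * α)⁻¹)) := by
      apply h3.congr
      intro n
      rw [inv_div]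
    exact h4.mul_const (f x)
  have htle : t ≤ (1 - 2 * α)⁻¹ * f x := le_of_tendsto_of_tendsto ht hcoef hbound
  constructor
  · rw [div_le_one hf]
    have := mul_le_mul_of_nonneg_left htle hne.le
    calc (1 - 2 * α) * t ≤ (1 - 2 * α) * ((1 - 2 * α)⁻¹ * f x) := this
      _ = f x := by field_simp
  · intro h0
    subst h0
    have heq : Tendsto (fun _ : ℕ => f x) atTop (𝓝 t) := by
      apply ht.congr'
      filter_upwards [eventually_ge_atTop 1] with n hn
      have hn' : (n : ℝ) ≠ 0 := by
        have : (1 : ℝ) ≤ n := by exact_mod_cast hn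
        linarith
      simp only [mul_zero, Nat.floor_zero, Nat.cast_zero, mul_zero, sub_zero, Nat.sub_zero,
        zero_add]
      rw [hfull n hn]
      field_simp
    have : t = f x := tendsto_nhds_unique heq tendsto_const_nhds
    rw [this]
    field_simp
    norm_num
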